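/- If K ∈ M_n(ℝ) is a DPP kernel, then for every λ ∈ [0,1], the matrix (1−λ)K + (λ/2)I_n is also a DPP kernel. In other words, the set of DPP kernels is star-shaped with center (1/2)I_n. -/

import Mathlib

open Matrix BigOperators Finset

/-- The indicator vector of the subset `S`. -/
def indVec {n : ℕ} (S : Finset (Fin n)) : Fin n → ℝ := fun i => if i ∈ S then 1 else 0

/-- `K` is a DPP kernel: each value `P(X = Sᶜ) = det(D(1_{Sᶜ})(I-K) + D(1_S)K)` is
nonnegative, i.e. `K` defines a determinantal point process. -/
def IsDPPKernel {n : ℕ} (K : Matrix (Fin n) (Fin n) ℝ) : Prop :=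
  ∀ S : Finset (Fin n),
    0 ≤ (Matrix.diagonal (indVec Sᶜ) * (1 - K) + Matrix.diagonal (indVec S) * K).det

theorem dpp_kernels_star_shaped {n : ℕ} (K : Matrix (Fin n) (Fin n) ℝ)
    (hK : IsDPPKernel K) (lam : ℝ) (hlam : lam ∈ Set.Icc (0 : ℝ) 1) :
    IsDPPKernel ((1 - lam) • K + (lam / 2) • (1 : Matrix (Fin n) (Fin n) ℝ)) := by
  obtain ⟨h0, h1⟩ := hlam
  intro S
  set K' : Matrix (Fin n) (Fin n) ℝ :=
    (1 - lam) • K + (lam / 2) • (1 : Matrix (Fin n) (Fin n) ℝ) with hK'def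
  -- coefficient of picking row `K i` (vs row `(1-K) i`)
  set c : Fin n → ℝ := fun i => if i ∈ S then 1 - lam / 2 else lam / 2 with hc
  have hc0 : ∀ i, 0 ≤ c i := by
    intro i; simp only [hc]; split <;> linarith
  have hc1 : ∀ i, c i ≤ 1 := by
    intro i; simp only [hc]; split <;> linarith
  set a : Fin n → Fin n → ℝ := fun i => c i • K i with ha
  set b : Fin n → Fin n → ℝ := fun i => (1 - c i) • (1 - K) i with hb
  have key : (Matrix.diagonal (indVec Sᶜ) * (1 - K') + Matrix.diagonal (indVec S) * K')
      = a + b := by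
    funext i j
    simp only [Matrix.add_apply, Matrix.diagonal_mul, Matrix.sub_apply, Matrix.smul_apply,
      Matrix.one_apply, hK'def, ha, hb, hc, indVec, Finset.mem_compl, Pi.add_apply,
      Pi.smul_apply, Pi.sub_apply, smul_eq_mul, Matrix.of_apply]
    by_cases hij : i = j
    · subst hij; by_cases hiS : i ∈ S <;> simp [hiS] <;> ring
    · by_cases hiS : i ∈ S <;> simp [hiS, hij] <;> ring
  rw [key]
  have hdet : Matrix.det (a + b) = (Matrix.detRowAlternating (R := ℝ) (n := Fin n)).toMultilinearMap
      (a + b) := rfl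
  rw [hdet, MultilinearMap.map_add_univ]
  apply Finset.sum_nonneg
  intro T _
  have hpw : T.piecewise a b = fun i =>
      (if i ∈ T then c i else 1 - c i) •
        (Matrix.diagonal (indVec Tᶜ) * (1 - K) + Matrix.diagonal (indVec T) * K) i := by
    funext i j
    by_cases hiT : i ∈ T <;>
      simp [Finset.piecewise, hiT, ha, hb, indVec, Matrix.diagonal_mul, Matrix.add_apply,
        Matrix.sub_apply, Matrix.one_apply]
  rw [hpw]
  erw [MultilinearMap.map_smul_univ]
  have : (Matrix.detRowAlternating (R := ℝ) (n := Fin n)).toMultilinearMap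
      ((Matrix.diagonal (indVec Tᶜ) * (1 - K) + Matrix.diagonal (indVec T) * K :
        Matrix (Fin n) (Fin n) ℝ) : Fin n → Fin n → ℝ)
      = (Matrix.diagonal (indVec Tᶜ) * (1 - K) + Matrix.diagonal (indVec T) * K).det := rfl
  rw [this, smul_eq_mul]
  refine mul_nonneg (Finset.prod_nonneg fun i _ => ?_) (hK T)
  split
  · exact hc0 i
  · linarith [hc1 i]
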